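/- Let A be a unital C*-algebra and let p, q be projections in A with ‖p − q‖ < 1. Then p and q are unitarily equivalent, i.e., there exists a unitary u ∈ A with u*pu = q. -/

import Mathlib

/-- Anything commuting with `a` and `star a` commutes with every element of the
C*-algebra generated by `a`. -/
lemma commute_of_mem_elemental {A : Type*} [CStarAlgebra A] {a b x : A}
    (hx : x ∈ StarAlgebra.elemental ℂ a) (h1 : Commute b a) (h2 : Commute b (star a)) :
    Commute b x := by
  set S : Set A := {y : A | Commute b y ∧ Commute b (star y)} with hS
  have hclosed : IsClosed S := by
    have : S = ((fun y => b * y - y * b) ⁻¹' {0}) ∩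
        ((fun y => b * star y - star y * b) ⁻¹' {0}) := by
      ext y; simp [hS, Commute, SemiconjBy, sub_eq_zero]
    rw [this]
    exact (isClosed_singleton.preimage (by fun_prop)).inter
      (isClosed_singleton.preimage (by fun_prop))
  have hsub : ((StarAlgebra.adjoin ℂ ({a} : Set A) : StarSubalgebra ℂ A) : Set A) ⊆ S := by
    intro y hy
    induction hy using StarAlgebra.adjoin_induction with
    | mem z hz => simp only [Set.mem_singleton_iff] at hz; subst hz; exact ⟨h1, h2⟩
    | algebraMap r =>
        exact ⟨Algebra.commute_algebraMap_right r b, by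
          rw [← algebraMap_star_comm]; exact Algebra.commute_algebraMap_right _ b⟩
    | add _ _ _ _ hx hy =>
        exact ⟨hx.1.add_right hy.1, by simpa [star_add] using hx.2.add_right hy.2⟩
    | mul _ _ _ _ hx hy =>
        exact ⟨hx.1.mul_right hy.1, by simpa [star_mul] using hy.2.mul_right hx.2⟩
    | star z _ hz => exact ⟨hz.2, by simpa using hz.1⟩
  exact (closure_minimal hsub hclosed hx).1

/-- Anything commuting with a selfadjoint element `a` commutes with `cfc f a`. -/
lemma commute_cfc_real {A : Type*} [CStarAlgebra A] {a b : A} (ha : IsSelfAdjoint a)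
    (hab : Commute b a) (f : ℝ → ℝ) : Commute b (cfc f a) := by
  rw [cfc_real_eq_complex f ha]
  refine cfc_cases (fun x => Commute b x) a _ (Commute.zero_right b) fun hf ha' => ?_
  rw [cfcHom_eq_of_isStarNormal]
  exact commute_of_mem_elemental (SetLike.coe_mem _) hab (ha.star_eq.symm ▸ hab)

/-- Two projections at distance less than 1 in a unital C*-algebra are
unitarily equivalent. -/
theorem projections_close_unitarily_equivalent
    {A : Type*} [CStarAlgebra A]
    (p q : A) (hp : p = star p ∧ p * p = p) (hq : q = star q ∧ q * q = q)
    (hpq : ‖p - q‖ < 1) :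
    ∃ u : A, u ∈ unitary A ∧ star u * p * u = q := by
  obtain ⟨hps, hpi⟩ := hp
  obtain ⟨hqs, hqi⟩ := hq
  have hpi' : ∀ x : A, p * (p * x) = p * x := fun x => by rw [← mul_assoc, hpi]
  have hqi' : ∀ x : A, q * (q * x) = q * x := fun x => by rw [← mul_assoc, hqi]
  set w : A := p * q + (1 - p) * (1 - q) with hw
  set a : A := 1 - (p - q) * (p - q) with ha
  have hws : star w = q * p + (1 - q) * (1 - p) := by
    simp [hw, star_mul, star_sub, ← hps, ← hqs]
  have h1 : star w * w = a := by
    rw [hws, hw, ha]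
    noncomm_ring
    simp only [mul_assoc, hpi, hqi, hpi', hqi']
    abel
  have h2 : w * star w = a := by
    rw [hws, hw, ha]
    noncomm_ring
    simp only [mul_assoc, hpi, hqi, hpi', hqi']
    abel
  have hpa : Commute p a := by
    rw [ha]; simp only [Commute, SemiconjBy]
    noncomm_ring
    simp only [mul_assoc, hpi, hqi, hpi', hqi']
    abel
  have hqa : Commute q a := by
    rw [ha]; simp only [Commute, SemiconjBy]
    noncomm_ring
    simp only [mul_assoc, hpi, hqi, hpi', hqi']
    abel
  have hpw : p * w = w * q := by
    rw [hw]
    noncomm_ring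
    simp only [mul_assoc, hpi, hqi, hpi', hqi']
    abel
  have hwa : Commute w a := by
    have : w * (star w * w) = (w * star w) * w := by noncomm_ring
    rw [h1, h2] at this
    exact this
  -- selfadjointness and positivity of a
  have hasa : IsSelfAdjoint a := by
    rw [← h1]; exact IsSelfAdjoint.star_mul_self w
  -- a is a unit
  have hdu : ‖(p - q) * (p - q)‖ < 1 := by
    have h0 := norm_nonneg (p - q)
    calc ‖(p - q) * (p - q)‖ ≤ ‖p - q‖ * ‖p - q‖ := norm_mul_le _ _
    _ < 1 := by nlinarith
  have haunit : IsUnit a := by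
    rw [ha]; exact (Units.oneSub _ hdu).isUnit
  -- spectrum of a is positive
  have hspec : ∀ x ∈ spectrum ℝ a, 0 < x := by
    intro x hx
    have hnn : 0 ≤ x := spectrum_star_mul_self_nonneg x (by rw [h1]; exact hx)
    rcases hnn.lt_or_eq with h | h
    · exact h
    · exact absurd haunit (spectrum.not_isUnit_of_zero_mem (R := ℝ) (a := a) (by rw [h]; exact hx))
  -- inverse square root of a via continuous functional calculus
  set f : ℝ → ℝ := fun x => (Real.sqrt x)⁻¹ with hf
  have hcont : ContinuousOn f (spectrum ℝ a) := by
    intro x hx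
    have hx' := hspec x hx
    exact (Real.continuous_sqrt.continuousAt.inv₀
      (by positivity)).continuousWithinAt
  set s : A := cfc f a with hs
  have hssa : s * s * a = 1 := by
    rw [hs]
    nth_rewrite 3 [← cfc_id ℝ a hasa]
    rw [← cfc_mul f f a hcont hcont,
        ← cfc_mul (fun x => f x * f x) id a (hcont.mul hcont) (continuousOn_id)]
    rw [show (1 : A) = cfc (fun _ : ℝ => (1 : ℝ)) a from (cfc_const_one ℝ a hasa).symm]
    apply cfc_congr
    intro x hx
    have hx' := hspec x hx
    have hsx : Real.sqrt x ≠ 0 := by positivity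
    field_simp [hf]
    simp only [hf, id_eq]; rw [inv_pow, Real.sq_sqrt hx'.le, inv_mul_cancel₀ hx'.ne']
  have hcomm : ∀ b : A, Commute b a → Commute b s := fun b hb =>
    commute_cfc_real hasa hb f
  have hssa' : IsSelfAdjoint s := cfc_predicate f a
  have hsw : Commute w s := hcomm w hwa
  have hsq : Commute q s := hcomm q hqa
  have hsa : Commute s a := (hcomm a (Commute.refl a)).symm
  refine ⟨w * s, ?_, ?_⟩
  · rw [Unitary.mem_iff]
    constructor
    · calc star (w * s) * (w * s) = s * (star w * w) * s := by
            rw [star_mul, hssa'.star_eq]; noncomm_ring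
      _ = s * a * s := by rw [h1]
      _ = s * s * a := by rw [mul_assoc, ← hsa.eq, ← mul_assoc]
      _ = 1 := hssa
    · calc (w * s) * star (w * s) = w * (s * s) * star w := by
            rw [star_mul, hssa'.star_eq]; noncomm_ring
      _ = s * s * (w * star w) := by
            rw [(hsw.mul_right hsw).eq, mul_assoc]
      _ = s * s * a := by rw [h2]
      _ = 1 := hssa
  · have huni : star (w * s) * (w * s) = 1 := by
      calc star (w * s) * (w * s) = s * (star w * w) * s := by
            rw [star_mul, hssa'.star_eq]; noncomm_ring
      _ = s * a * s := by rw [h1]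
      _ = s * s * a := by rw [mul_assoc, ← hsa.eq, ← mul_assoc]
      _ = 1 := hssa
    have hkey : p * (w * s) = (w * s) * q := by
      rw [← mul_assoc, hpw, mul_assoc, hsq.eq, ← mul_assoc]
    calc star (w * s) * p * (w * s) = star (w * s) * (p * (w * s)) := mul_assoc _ _ _
    _ = star (w * s) * ((w * s) * q) := by rw [hkey]
    _ = (star (w * s) * (w * s)) * q := (mul_assoc _ _ _).symm
    _ = q := by rw [huni, one_mul]
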